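/- arXiv:2102.03182 — 3 statements merged into one kernel-verified Lean document; each statement's English description precedes it below -/
import Mathlib

section
/- Every vertex of the polytope P_n = {u ∈ ℝ_{≥0}^{n+1} : u_i + u_{i+1} ≤ 1 for all 0 ≤ i ≤ n−1} is a 0/1-vector with no two consecutive coordinates equal to 1. In particular, P_n is a lattice polytope. -/
lemma key (n : ℕ) (w : ℕ → ℝ) (hpos : ∀ k, 0 ≤ w k)
    (hle : ∀ k, k < n → w k + w (k+1) ≤ 1) (j : ℕ) (hj : j ≤ n)
    (h0 : w j ≠ 0) (h1 : w j ≠ 1) :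
    ∃ d : ℕ → ℝ, d j ≠ 0 ∧ (∀ k, 0 ≤ w k + d k) ∧ (∀ k, 0 ≤ w k - d k) ∧
      (∀ k, k < n → w k + d k + (w (k+1) + d (k+1)) ≤ 1) ∧
      (∀ k, k < n → w k - d k + (w (k+1) - d (k+1)) ≤ 1) := by
  classical
  -- left endpoint
  have hexA : ∃ a, ∀ k, a ≤ k → k < j → w k + w (k+1) = 1 :=
    ⟨j, fun k hk1 hk2 => absurd hk2 (by omega)⟩
  set a := Nat.find hexA with ha
  have hAspec : ∀ k, a ≤ k → k < j → w k + w (k+1) = 1 := Nat.find_spec hexA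
  have haj : a ≤ j := Nat.find_le (fun k hk1 hk2 => absurd hk2 (by omega))
  have haL : a ≠ 0 → w (a-1) + w a ≠ 1 := by
    intro ha0 hcon
    have hmin : ¬ (∀ k, a - 1 ≤ k → k < j → w k + w (k+1) = 1) := Nat.find_min hexA (by omega)
    apply hmin
    intro k hk1 hk2
    rcases Nat.eq_or_lt_of_le hk1 with h | h
    · have hk : k = a - 1 := h.symm
      subst hk
      rwa [show a - 1 + 1 = a from by omega]
    · exact hAspec k (by omega) hk2
  -- right endpoint
  set P : ℕ → Prop := fun b => ∀ k, j ≤ k → k < b → w k + w (k+1) = 1 with hP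
  have hPj : P j := fun k hk1 hk2 => absurd hk1 (by omega)
  set b := Nat.findGreatest P n with hb
  have hjb : j ≤ b := Nat.le_findGreatest hj hPj
  have hbn : b ≤ n := Nat.findGreatest_le n
  have hBspec : ∀ k, j ≤ k → k < b → w k + w (k+1) = 1 := Nat.findGreatest_spec hj hPj
  have hbR : b ≠ n → w b + w (b+1) ≠ 1 := by
    intro hbn' hcon
    have hng : ¬ P (b+1) := Nat.findGreatest_is_greatest (P := P) (n := n) (by omega) (by omega)
    apply hng
    intro k hk1 hk2
    rcases Nat.lt_or_ge k b with h | h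
    · exact hBspec k hk1 h
    · have : k = b := by omega
      rw [this]; exact hcon
  -- positivity along the chain
  have hA : ∀ k, a ≤ k → k ≤ j → 0 < w k ∧ w k ≠ 1 := by
    have main : ∀ m, a ≤ j - m → 0 < w (j - m) ∧ w (j - m) ≠ 1 := by
      intro m
      induction m with
      | zero => intro _; exact ⟨lt_of_le_of_ne (hpos j) (Ne.symm h0), h1⟩
      | succ m ih =>
        intro hm
        rcases Nat.lt_or_ge m j with hmj | hmj
        · have hk : j - (m+1) + 1 = j - m := by omega
          have ht : w (j - (m+1)) + w (j - (m+1) + 1) = 1 :=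
            hAspec _ hm (by omega)
          rw [hk] at ht
          obtain ⟨ih1, ih2⟩ := ih (by omega)
          have hle1 : w (j - m) ≤ 1 := by linarith [hpos (j - (m+1))]
          have hlt : w (j - m) < 1 := lt_of_le_of_ne hle1 ih2
          constructor
          · linarith
          · intro hcon; rw [hcon] at ht; linarith
        · have : j - (m+1) = j - m := by omega
          rw [this]; exact ih (by omega)
    intro k hk1 hk2
    have : k = j - (j - k) := by omega
    rw [this]; exact main (j - k) (by omega)
  have hB : ∀ k, j ≤ k → k ≤ b → 0 < w k ∧ w k ≠ 1 := by
    intro k hk1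
    induction k, hk1 using Nat.le_induction with
    | base => intro _; exact ⟨lt_of_le_of_ne (hpos j) (Ne.symm h0), h1⟩
    | succ k hk ih =>
      intro hkb
      obtain ⟨ih1, ih2⟩ := ih (by omega)
      have ht : w k + w (k+1) = 1 := hBspec k hk (by omega)
      have hle1 : w k ≤ 1 := by linarith [hpos (k+1)]
      have hlt : w k < 1 := lt_of_le_of_ne hle1 ih2
      constructor
      · linarith
      · intro hcon; rw [hcon] at ht; linarith
  -- choose epsilon
  have hane : (Finset.Icc a b).Nonempty := ⟨j, Finset.mem_Icc.mpr ⟨haj, hjb⟩⟩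
  set ε₀ : ℝ := (Finset.Icc a b).inf' hane w with hε₀
  set sL : ℝ := if a = 0 then 1 else 1 - (w (a-1) + w a) with hsL
  set sR : ℝ := if b = n then 1 else 1 - (w b + w (b+1)) with hsR
  set ε : ℝ := min ε₀ (min sL sR) with hε
  have hwε : ∀ k, a ≤ k → k ≤ b → 0 < w k := by
    intro k hk1 hk2
    rcases le_or_gt k j with h | h
    · exact (hA k hk1 h).1
    · exact (hB k (le_of_lt h) hk2).1
  have hε₀pos : 0 < ε₀ := by
    rw [hε₀, Finset.lt_inf'_iff]
    intro k hk
    rw [Finset.mem_Icc] at hk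
    exact hwε k hk.1 hk.2
  have hsLpos : 0 < sL := by
    rw [hsL]
    split_ifs with h
    · norm_num
    · have h1n : a - 1 < n := by omega
      have := hle (a-1) h1n
      rw [show a - 1 + 1 = a from by omega] at this
      have hne := haL h
      rcases lt_or_eq_of_le this with h' | h'
      · linarith
      · exact absurd h' hne
  have hsRpos : 0 < sR := by
    rw [hsR]
    split_ifs with h
    · norm_num
    · have := hle b (by omega)
      have := hbR h
      rcases lt_or_eq_of_le ‹w b + w (b+1) ≤ 1› with h' | h'
      · linarith
      · exact absurd h' this
  have hεpos : 0 < ε := lt_min hε₀pos (lt_min hsLpos hsRpos)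
  have hεw : ∀ k, a ≤ k → k ≤ b → ε ≤ w k := by
    intro k hk1 hk2
    exact le_trans (min_le_left _ _) (Finset.inf'_le w (Finset.mem_Icc.mpr ⟨hk1, hk2⟩))
  have hεL : ε ≤ sL := le_trans (min_le_right _ _) (min_le_left _ _)
  have hεR : ε ≤ sR := le_trans (min_le_right _ _) (min_le_right _ _)
  -- the perturbation
  set d : ℕ → ℝ := fun k => if a ≤ k ∧ k ≤ b then (-1)^k * ε else 0 with hdd
  have hd0 : ∀ k, ¬(a ≤ k ∧ k ≤ b) → d k = 0 := by
    intro k hk; simp only [hdd]; rw [if_neg hk]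
  have hdin : ∀ k, a ≤ k → k ≤ b → d k = ε ∨ d k = -ε := by
    intro k hk1 hk2
    simp only [hdd]; rw [if_pos ⟨hk1, hk2⟩]
    rcases Nat.even_or_odd k with h | h
    · left; rw [h.neg_one_pow, one_mul]
    · right; rw [h.neg_one_pow, neg_one_mul]
  have hdsum : ∀ k, a ≤ k → k + 1 ≤ b → d k + d (k+1) = 0 := by
    intro k hk1 hk2
    simp only [hdd]
    rw [if_pos ⟨hk1, by omega⟩, if_pos ⟨by omega, hk2⟩, pow_succ]
    ring
  have hdj : d j ≠ 0 := by
    simp only [hdd]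
    rw [if_pos ⟨haj, hjb⟩]
    intro hcon
    rcases mul_eq_zero.mp hcon with h | h
    · exact absurd h (by positivity)
    · linarith
  have hnn : ∀ k, 0 ≤ w k + d k ∧ 0 ≤ w k - d k := by
    intro k
    by_cases h : a ≤ k ∧ k ≤ b
    · have h1 := hεw k h.1 h.2
      rcases hdin k h.1 h.2 with h2 | h2 <;> rw [h2] <;>
        constructor <;> linarith [hpos k]
    · rw [hd0 k h]; constructor <;> linarith [hpos k]
  have hedge : ∀ k, k < n →
      w k + d k + (w (k+1) + d (k+1)) ≤ 1 ∧ w k - d k + (w (k+1) - d (k+1)) ≤ 1 := by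
    intro k hk
    have hc := hle k hk
    rcases Nat.lt_or_ge (k+1) a with h1 | h1
    · rw [hd0 k (by omega), hd0 (k+1) (by omega)]
      constructor <;> linarith
    rcases Nat.lt_or_ge b k with h2 | h2
    · rw [hd0 k (by omega), hd0 (k+1) (by omega)]
      constructor <;> linarith
    rcases Nat.eq_or_lt_of_le h1 with he | he
    · -- k + 1 = a : left boundary edge
      have e1 : d k = 0 := hd0 k (by omega)
      have e3 : a - 1 = k := by omega
      have e4 : a = k + 1 := he
      have hsLv : sL = 1 - (w k + w (k+1)) := by
        rw [hsL, if_neg (show ¬ a = 0 by omega), e3, e4]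
      rcases hdin (k+1) (by omega) (by omega) with e2 | e2 <;>
        rw [e1, e2] <;> constructor <;> linarith [hεL]
    rcases Nat.eq_or_lt_of_le h2 with hf | hf
    · -- k = b : right boundary edge
      have e1 : d (k+1) = 0 := hd0 (k+1) (by omega)
      have e4 : b = k := hf.symm
      have hsRv : sR = 1 - (w k + w (k+1)) := by
        rw [hsR, if_neg (show ¬ b = n by omega), e4]
      rcases hdin k (by omega) (by omega) with e2 | e2 <;>
        rw [e1, e2] <;> constructor <;> linarith [hεR]
    · -- interior edge
      have hz := hdsum k (by omega) (by omega)
      constructor <;> linarith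
  exact ⟨d, hdj, fun k => (hnn k).1, fun k => (hnn k).2,
    fun k hk => (hedge k hk).1, fun k hk => (hedge k hk).2⟩

theorem stmt1 (n : ℕ) (u : Fin (n+1) → ℝ)
    (hu : u ∈ Set.extremePoints ℝ {v : Fin (n+1) → ℝ |
      (∀ i, 0 ≤ v i) ∧ ∀ i : Fin n, v i.castSucc + v i.succ ≤ 1}) :
    (∀ i, u i = 0 ∨ u i = 1) ∧ ∀ i : Fin n, ¬(u i.castSucc = 1 ∧ u i.succ = 1) := by
  classical
  obtain ⟨hmem, hext⟩ := hu
  obtain ⟨hposF, hleF⟩ := hmem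
  constructor
  · intro j0
    by_contra hj
    push_neg at hj
    obtain ⟨hj0, hj1⟩ := hj
    set w : ℕ → ℝ := fun k => if h : k < n + 1 then u ⟨k, h⟩ else 0 with hw
    have hwe : ∀ i : Fin (n+1), w i.val = u i := by
      intro i; simp only [hw]; rw [dif_pos i.isLt]
    have hwpos : ∀ k, 0 ≤ w k := by
      intro k; simp only [hw]; split_ifs with h
      · exact hposF _
      · exact le_refl 0
    have hwle : ∀ k, k < n → w k + w (k+1) ≤ 1 := by
      intro k hk
      have hc := hleF ⟨k, hk⟩
      simp only [hw]; rw [dif_pos (by omega), dif_pos (by omega)]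
      exact hc
    have hwj0 : w j0.val ≠ 0 := by rw [hwe j0]; exact hj0
    have hwj1 : w j0.val ≠ 1 := by rw [hwe j0]; exact hj1
    obtain ⟨d, hdj, h1, h2, h3, h4⟩ :=
      key n w hwpos hwle j0.val (Nat.lt_succ_iff.mp j0.isLt) hwj0 hwj1
    set d' : Fin (n+1) → ℝ := fun i => d i.val with hd'
    have hcv : ∀ i : Fin n, i.castSucc.val = i.val := fun i => rfl
    have hsv : ∀ i : Fin n, i.succ.val = i.val + 1 := fun i => rfl
    have hv1 : (u + d') ∈ {v : Fin (n+1) → ℝ |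
        (∀ i, 0 ≤ v i) ∧ ∀ i : Fin n, v i.castSucc + v i.succ ≤ 1} := by
      constructor
      · intro i
        have := h1 i.val
        rw [hwe i] at this
        exact this
      · intro i
        simp only [Pi.add_apply, hd']
        rw [← hwe i.castSucc, ← hwe i.succ, hcv, hsv]
        exact h3 i.val i.isLt
    have hv2 : (u - d') ∈ {v : Fin (n+1) → ℝ |
        (∀ i, 0 ≤ v i) ∧ ∀ i : Fin n, v i.castSucc + v i.succ ≤ 1} := by
      constructor
      · intro i
        have := h2 i.val
        rw [hwe i] at this
        exact this
      · intro i
        simp only [Pi.sub_apply, hd']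
        rw [← hwe i.castSucc, ← hwe i.succ, hcv, hsv]
        exact h4 i.val i.isLt
    have hmid : u ∈ openSegment ℝ (u + d') (u - d') := by
      refine ⟨1/2, 1/2, by norm_num, by norm_num, by norm_num, ?_⟩
      funext i
      simp only [Pi.add_apply, Pi.sub_apply, Pi.smul_apply, smul_eq_mul]
      ring
    have := hext hv1 hv2 hmid
    have hz : d' j0 = 0 := by
      have := congrFun this j0
      simp only [Pi.add_apply] at this
      linarith
    exact hdj hz
  · intro i ⟨hc1, hc2⟩
    have := hleF i
    rw [hc1, hc2] at this
    linarith
end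

section
/- Let f_k ∈ ℂ[x_0,…,x_n] be the coefficient of t^k in (x_0 + x_1 t + ⋯ + x_n t^n)^p. For k = mp + (p − a) with 0 ≤ m ≤ n−1 and 1 ≤ a ≤ p, the leading monomial of f_k with respect to the reverse lexicographic order (with x_0 ≺ x_1 ≺ ⋯ ≺ x_n) is x_m^a x_{m+1}^{p−a}; and for k = np the leading monomial is x_n^p. -/
open MvPolynomial

/-- `u ≺ v` in the reverse lexicographic order (with `x_0 ≺ x_1 ≺ ⋯`):
at the smallest index where they differ, `u` has the larger exponent. -/
def revLexLt {N : ℕ} (u v : Fin N →₀ ℕ) : Prop :=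
  ∃ i : Fin N, v i < u i ∧ ∀ j : Fin N, j < i → u j = v j

/-- The coefficient of `t^k` in `(x_0 + x_1 t + ⋯ + x_n t^n)^p`. -/
noncomputable def fcoeff (n p k : ℕ) : MvPolynomial (Fin (n+1)) ℂ :=
  Polynomial.coeff ((∑ i : Fin (n+1),
    Polynomial.C (X i : MvPolynomial (Fin (n+1)) ℂ) * Polynomial.X ^ (i : ℕ)) ^ p) k

noncomputable def SN (n : ℕ) : Polynomial (MvPolynomial (Fin (n+1)) ℕ) :=
  ∑ i : Fin (n+1), Polynomial.C (X i) * Polynomial.X ^ (i : ℕ)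

noncomputable def fN (n p k : ℕ) : MvPolynomial (Fin (n+1)) ℕ :=
  Polynomial.coeff ((SN n) ^ p) k

lemma coeff_SN (n y : ℕ) :
    Polynomial.coeff (SN n) y = if h : y < n + 1 then X (⟨y, h⟩ : Fin (n+1)) else 0 := by
  unfold SN
  rw [Polynomial.finset_sum_coeff]
  simp only [Polynomial.coeff_C_mul, Polynomial.coeff_X_pow]
  split
  · next h =>
    rw [Finset.sum_eq_single (⟨y, h⟩ : Fin (n+1))]
    · simp
    · intro b _ hb
      simp only [mul_ite, mul_one, mul_zero, ite_eq_right_iff]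
      intro hby; exact absurd (Fin.ext (by simp [hby])) hb
    · simp
  · next h =>
    apply Finset.sum_eq_zero
    intro b _
    simp only [mul_ite, mul_one, mul_zero, ite_eq_right_iff]
    intro hby; omega

lemma support_fN (n p k : ℕ) (e : Fin (n+1) →₀ ℕ) (he : e ∈ (fN n p k).support) :
    (∑ j, e j) = p ∧ (∑ j : Fin (n+1), (j : ℕ) * e j) = k := by
  induction p generalizing k e with
  | zero =>
    simp only [fN, pow_zero, Polynomial.coeff_one] at he
    rw [mem_support_iff] at he
    rcases eq_or_ne k 0 with rfl | hk
    · simp only [if_pos rfl, MvPolynomial.coeff_one] at he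
      have hez : e = 0 := by
        by_contra h
        simp [MvPolynomial.coeff_one, Ne.symm h] at he
      subst hez
      simp
    · simp [hk] at he
  | succ p ih =>
    simp only [fN, pow_succ, Polynomial.coeff_mul] at he
    rw [mem_support_iff] at he
    have : ∃ x ∈ Finset.HasAntidiagonal.antidiagonal k,
        coeff e (Polynomial.coeff ((SN n) ^ p) x.1 * Polynomial.coeff (SN n) x.2) ≠ 0 := by
      by_contra hc
      push_neg at hc
      apply he
      rw [MvPolynomial.coeff_sum]
      exact Finset.sum_eq_zero hc
    obtain ⟨⟨x, y⟩, hxy, hne⟩ := this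
    rw [coeff_SN] at hne
    split at hne
    · next hy =>
      rw [MvPolynomial.coeff_mul_X'] at hne
      split at hne
      · next hmem =>
        have h1 := ih x (e - Finsupp.single ⟨y, hy⟩ 1) (mem_support_iff.2 hne)
        have hsub : (e - Finsupp.single ⟨y, hy⟩ 1) + Finsupp.single ⟨y, hy⟩ 1 = e := by
          apply tsub_add_cancel_of_le
          rw [Finsupp.single_le_iff]
          exact Nat.one_le_iff_ne_zero.2 (by simpa [Finsupp.mem_support_iff] using hmem)
        rw [Finset.HasAntidiagonal.mem_antidiagonal] at hxy
        constructor
        · rw [← hsub]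
          simp only [Finsupp.coe_add, Pi.add_apply]
          rw [Finset.sum_add_distrib, h1.1]
          simp [Finsupp.single_apply, Finset.sum_ite_eq']
        · rw [← hsub]
          simp only [Finsupp.coe_add, Pi.add_apply, mul_add]
          rw [Finset.sum_add_distrib, h1.2]
          have : (∑ j : Fin (n+1), (j:ℕ) * (Finsupp.single (⟨y, hy⟩ : Fin (n+1)) 1) j) = y := by
            simp [Finsupp.single_apply, mul_ite, Finset.sum_ite_eq']
          omega
      · exact absurd rfl hne
    · simp at hne

lemma pos_fN (n p k : ℕ) (e : Fin (n+1) →₀ ℕ) (h1 : (∑ j, e j) = p)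
    (h2 : (∑ j : Fin (n+1), (j : ℕ) * e j) = k) : 0 < coeff e (fN n p k) := by
  induction p generalizing k e with
  | zero =>
    have he : e = 0 := by
      ext j
      have := Finset.sum_eq_zero_iff.1 h1 j (Finset.mem_univ j)
      simpa using this
    subst he
    simp only [Finset.sum_const_zero, Finsupp.coe_zero, Pi.zero_apply, mul_zero] at h2
    subst h2
    simp [fN, Polynomial.coeff_one, coeff_zero_one]
  | succ p ih =>
    have hne : e ≠ 0 := by
      intro h; subst h; simp at h1
    obtain ⟨i, hi⟩ : ∃ i, e i ≠ 0 := by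
      by_contra hc; push_neg at hc
      exact hne (Finsupp.ext fun j => hc j)
    have hik : (i : ℕ) ≤ k := by
      have : (i:ℕ) * e i ≤ k := h2 ▸ Finset.single_le_sum (f := fun j : Fin (n+1) => (j:ℕ) * e j)
        (fun j _ => Nat.zero_le _) (Finset.mem_univ i)
      have : (i:ℕ) * 1 ≤ (i:ℕ) * e i := Nat.mul_le_mul_left _ (Nat.one_le_iff_ne_zero.2 hi)
      omega
    set e' := e - Finsupp.single i 1 with he'
    have hsub : e' + Finsupp.single i 1 = e := by
      apply tsub_add_cancel_of_le
      rw [Finsupp.single_le_iff]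
      omega
    have hd : (∑ j, e' j) = p := by
      have : (∑ j, e' j) + 1 = p + 1 := by
        rw [← h1, ← hsub]
        simp only [Finsupp.coe_add, Pi.add_apply]
        rw [Finset.sum_add_distrib]
        simp [Finsupp.single_apply, Finset.sum_ite_eq']
      omega
    have hw : (∑ j : Fin (n+1), (j:ℕ) * e' j) = k - (i:ℕ) := by
      have : (∑ j : Fin (n+1), (j:ℕ) * e' j) + (i:ℕ) = k := by
        rw [← h2]
        conv_rhs => rw [← hsub]
        simp only [Finsupp.coe_add, Pi.add_apply, mul_add]
        rw [Finset.sum_add_distrib]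
        congr 1
        simp [Finsupp.single_apply, mul_ite, Finset.sum_ite_eq']
      omega
    have ihp := ih (k - (i:ℕ)) e' hd hw
    have key : coeff e' (fN n p (k - (i:ℕ))) ≤ coeff e (fN n (p+1) k) := by
      have hmem2 : ((k - (i:ℕ)), (i:ℕ)) ∈ Finset.HasAntidiagonal.antidiagonal k := by
        rw [Finset.HasAntidiagonal.mem_antidiagonal]; omega
      have hle := Finset.single_le_sum (f := fun x : ℕ × ℕ =>
        coeff e (Polynomial.coeff ((SN n)^p) x.1 * Polynomial.coeff (SN n) x.2))
        (fun _ _ => Nat.zero_le _) hmem2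
      have heq : coeff e (Polynomial.coeff ((SN n)^p) (k - (i:ℕ)) * Polynomial.coeff (SN n) (i:ℕ))
          = coeff e' (fN n p (k - (i:ℕ))) := by
        rw [coeff_SN, dif_pos i.isLt, ← hsub]
        simp only [Fin.eta]
        exact MvPolynomial.coeff_mul_X _ _ _
      have hle' : coeff e' (fN n p (k - (i:ℕ))) ≤ ∑ x ∈ Finset.HasAntidiagonal.antidiagonal k,
          coeff e (Polynomial.coeff ((SN n)^p) x.1 * Polynomial.coeff (SN n) x.2) := by
        simpa only [heq] using hle
      simpa only [fN, pow_succ, Polynomial.coeff_mul, MvPolynomial.coeff_sum] using hle'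
    exact lt_of_lt_of_le ihp key

lemma fcoeff_eq (n p k : ℕ) :
    fcoeff n p k = MvPolynomial.map (Nat.castRingHom ℂ) (fN n p k) := by
  unfold fcoeff fN SN
  rw [← Polynomial.coeff_map, Polynomial.map_pow]
  congr 2
  rw [Polynomial.map_sum]
  apply Finset.sum_congr rfl
  intro i _
  rw [Polynomial.map_mul, Polynomial.map_pow, Polynomial.map_C, Polynomial.map_X,
    MvPolynomial.map_X]

lemma coeff_fcoeff (n p k : ℕ) (e : Fin (n+1) →₀ ℕ) :
    coeff e (fcoeff n p k) = ((coeff e (fN n p k) : ℕ) : ℂ) := by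
  rw [fcoeff_eq, MvPolynomial.coeff_map]
  rfl

lemma crux (n p m a : ℕ) (hm : m + 1 ≤ n) (ha1 : 1 ≤ a) (hap : a ≤ p)
    (e : Fin (n+1) →₀ ℕ) (h1 : (∑ j, e j) = p)
    (h2 : (∑ j : Fin (n+1), (j:ℕ) * e j) = m * p + (p - a))
    (hvan : ∀ j : Fin (n+1), (j:ℕ) < m → e j = 0) :
    a ≤ e ⟨m, by omega⟩ ∧ (e ⟨m, by omega⟩ = a →
      e = Finsupp.single (⟨m, by omega⟩ : Fin (n+1)) a
        + Finsupp.single (⟨m+1, by omega⟩ : Fin (n+1)) (p - a)) := by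
  set M : Fin (n+1) := ⟨m, by omega⟩ with hM
  set M1 : Fin (n+1) := ⟨m+1, by omega⟩ with hM1
  have hMM1 : M ≠ M1 := by
    intro h
    have := congrArg Fin.val h
    simp [hM, hM1] at this
  obtain ⟨b, hb⟩ : ∃ b, p = a + b := ⟨p - a, by omega⟩
  have hpa : p - a = b := by omega
  rw [hpa] at h2 ⊢
  have step1 : a ≤ e M := by
    set w : Fin (n+1) → ℕ := fun j => if (j:ℕ) ≤ m then m else m+1 with hw
    have hA : (∑ j, w j * e j) ≤ ∑ j : Fin (n+1), (j:ℕ) * e j := by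
      apply Finset.sum_le_sum
      intro j _
      by_cases hj : (j:ℕ) < m
      · simp [hvan j hj]
      · apply Nat.mul_le_mul_right
        simp only [hw]
        split <;> omega
    have hB : (∑ j, w j * e j) + e M = (m+1) * p := by
      have key : (∑ j, w j * e j) + (∑ j, if j = M then e j else 0)
          = ∑ j : Fin (n+1), (m+1) * e j := by
        rw [← Finset.sum_add_distrib]
        apply Finset.sum_congr rfl
        intro j _
        by_cases hj : j = M
        · subst hj
          simp only [if_pos rfl, hw, hM, le_refl, if_pos]
          ring
        · rw [if_neg hj, add_zero]
          by_cases hj2 : (j:ℕ) < m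
          · simp [hvan j hj2]
          · have hjm : (j:ℕ) ≠ m := fun h => hj (Fin.ext (by simp [hM, h]))
            simp only [hw]
            rw [if_neg (by omega)]
      rw [Finset.sum_ite_eq' Finset.univ M e, if_pos (Finset.mem_univ M)] at key
      rw [key, ← Finset.mul_sum, h1]
    have : (m+1) * p ≤ m * p + b + e M := by
      rw [← hB, ← h2]; omega
    subst hb
    nlinarith
  refine ⟨step1, fun hEM => ?_⟩
  have step2 : b ≤ e M1 := by
    set w : Fin (n+1) → ℕ := fun j =>
      if (j:ℕ) ≤ m then m else if (j:ℕ) ≤ m+1 then m+1 else m+2 with hw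
    have hA : (∑ j, w j * e j) ≤ ∑ j : Fin (n+1), (j:ℕ) * e j := by
      apply Finset.sum_le_sum
      intro j _
      by_cases hj : (j:ℕ) < m
      · simp [hvan j hj]
      · apply Nat.mul_le_mul_right
        simp only [hw]
        split
        · omega
        · split <;> omega
    have hB : (∑ j, w j * e j) + 2 * e M + e M1 = (m+2) * p := by
      have key : (∑ j, w j * e j) + ((∑ j, if j = M then 2 * e j else 0)
          + (∑ j, if j = M1 then e j else 0)) = ∑ j : Fin (n+1), (m+2) * e j := by
        rw [← Finset.sum_add_distrib, ← Finset.sum_add_distrib]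
        apply Finset.sum_congr rfl
        intro j _
        by_cases hj : j = M
        · subst hj
          rw [if_pos rfl, if_neg hMM1]
          simp only [hw, hM, le_refl, if_pos]
          ring
        · rw [if_neg hj]
          by_cases hj1 : j = M1
          · subst hj1
            rw [if_pos rfl]
            have hA1 : ¬ ((M1:ℕ) ≤ m) := by simp [hM1]
            have hA2 : (M1:ℕ) ≤ m + 1 := by simp [hM1]
            simp only [hw]
            rw [if_neg hA1, if_pos hA2]
            ring
          · rw [if_neg hj1, add_zero, add_zero]
            by_cases hj2 : (j:ℕ) < m
            · simp [hvan j hj2]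
            · have hjm : (j:ℕ) ≠ m := fun h => hj (Fin.ext (by simp [hM, h]))
              have hjm1 : (j:ℕ) ≠ m+1 := fun h => hj1 (Fin.ext (by simp [hM1, h]))
              simp only [hw]
              rw [if_neg (by omega), if_neg (by omega)]
      rw [Finset.sum_ite_eq' Finset.univ M (fun j => 2 * e j), if_pos (Finset.mem_univ M),
        Finset.sum_ite_eq' Finset.univ M1 e, if_pos (Finset.mem_univ M1)] at key
      rw [← add_assoc] at key
      rw [key, ← Finset.mul_sum, h1]
    have : (m+2) * p ≤ m * p + b + 2 * e M + e M1 := by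
      rw [← hB, ← h2]; omega
    rw [hEM] at this
    subst hb
    nlinarith
  have hpair : e M + e M1 ≤ p := by
    have hsub : ({M, M1} : Finset (Fin (n+1))) ⊆ Finset.univ := Finset.subset_univ _
    have := Finset.sum_le_sum_of_subset (f := fun j => e j) hsub
    rw [Finset.sum_pair hMM1, h1] at this
    exact this
  have hEM1 : e M1 = b := by omega
  have hrest : ∀ j : Fin (n+1), j ≠ M → j ≠ M1 → e j = 0 := by
    intro j hjM hjM1
    have hsd : (∑ x ∈ Finset.univ \ {M, M1}, e x) + (∑ x ∈ ({M, M1} : Finset (Fin (n+1))), e x)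
        = ∑ x, e x := Finset.sum_sdiff (Finset.subset_univ _)
    rw [Finset.sum_pair hMM1, h1, hEM, hEM1] at hsd
    have hzero : (∑ x ∈ Finset.univ \ {M, M1}, e x) = 0 := by omega
    have := (Finset.sum_eq_zero_iff).1 hzero j ?_
    · exact this
    · simp [hjM, hjM1]
  ext j
  by_cases hjM : j = M
  · subst hjM
    simp [Finsupp.single_apply, hMM1, Ne.symm hMM1, hEM]
  · by_cases hjM1 : j = M1
    · subst hjM1
      simp [Finsupp.single_apply, hMM1, Ne.symm hMM1, hEM1]
    · simp [Finsupp.single_apply, Ne.symm hjM, Ne.symm hjM1, hrest j hjM hjM1]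

lemma find_min {N : ℕ} (e : Fin N →₀ ℕ) (m : ℕ)
    (h : ∃ j : Fin N, (j:ℕ) < m ∧ e j ≠ 0) :
    ∃ i : Fin N, (i:ℕ) < m ∧ e i ≠ 0 ∧ ∀ j : Fin N, j < i → e j = 0 := by
  classical
  obtain ⟨j₀, hj₀m, hj₀e⟩ := h
  set S := Finset.univ.filter (fun j : Fin N => (j:ℕ) < m ∧ e j ≠ 0) with hSdef
  have hS : S.Nonempty := ⟨j₀, by simp [hSdef, hj₀m, hj₀e]⟩
  obtain ⟨i, hiS, hmin⟩ := S.exists_min_image id hS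
  simp only [hSdef, Finset.mem_filter, Finset.mem_univ, true_and] at hiS
  refine ⟨i, hiS.1, hiS.2, ?_⟩
  intro j hj
  by_contra hje
  have hjS : j ∈ S := by
    simp only [hSdef, Finset.mem_filter, Finset.mem_univ, true_and]
    exact ⟨lt_trans (show (j:ℕ) < (i:ℕ) from hj) hiS.1, hje⟩
  have := hmin j hjS
  simp only [id] at this
  exact absurd hj (not_lt.2 this)

theorem stmt9 (n p : ℕ) (hp : 1 ≤ p) :
    (∀ m a : ℕ, (hm : m + 1 ≤ n) → 1 ≤ a → a ≤ p →
      MvPolynomial.coeff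
          (Finsupp.single (⟨m, by omega⟩ : Fin (n+1)) a +
            Finsupp.single (⟨m+1, by omega⟩ : Fin (n+1)) (p - a))
          (fcoeff n p (m * p + (p - a))) ≠ 0 ∧
        ∀ e ∈ (fcoeff n p (m * p + (p - a))).support,
          e ≠ Finsupp.single (⟨m, by omega⟩ : Fin (n+1)) a +
                Finsupp.single (⟨m+1, by omega⟩ : Fin (n+1)) (p - a) →
            revLexLt e (Finsupp.single (⟨m, by omega⟩ : Fin (n+1)) a +
                Finsupp.single (⟨m+1, by omega⟩ : Fin (n+1)) (p - a))) ∧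
    (MvPolynomial.coeff (Finsupp.single (⟨n, by omega⟩ : Fin (n+1)) p)
        (fcoeff n p (n * p)) ≠ 0 ∧
      ∀ e ∈ (fcoeff n p (n * p)).support,
        e ≠ Finsupp.single (⟨n, by omega⟩ : Fin (n+1)) p →
          revLexLt e (Finsupp.single (⟨n, by omega⟩ : Fin (n+1)) p)) := by
  constructor
  · intro m a hm ha1 hap
    set M : Fin (n+1) := ⟨m, by omega⟩ with hM
    set M1 : Fin (n+1) := ⟨m+1, by omega⟩ with hM1
    have hMM1 : M ≠ M1 := by
      intro h
      have := congrArg Fin.val h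
      simp [hM, hM1] at this
    set e₀ : Fin (n+1) →₀ ℕ := Finsupp.single M a + Finsupp.single M1 (p - a) with he₀
    have degE0 : (∑ j, e₀ j) = p := by
      simp only [he₀, Finsupp.coe_add, Pi.add_apply, Finsupp.single_apply]
      rw [Finset.sum_add_distrib, Finset.sum_ite_eq Finset.univ M (fun _ => a),
        Finset.sum_ite_eq Finset.univ M1 (fun _ => p - a)]
      simp only [Finset.mem_univ, if_pos]
      omega
    have wtE0 : (∑ j : Fin (n+1), (j:ℕ) * e₀ j) = m * p + (p - a) := by
      simp only [he₀, Finsupp.coe_add, Pi.add_apply, Finsupp.single_apply, mul_add, mul_ite,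
        mul_zero]
      rw [Finset.sum_add_distrib, Finset.sum_ite_eq Finset.univ M (fun j => (j:ℕ) * a),
        Finset.sum_ite_eq Finset.univ M1 (fun j => (j:ℕ) * (p - a))]
      simp only [Finset.mem_univ, if_pos]
      show m * a + (m+1) * (p - a) = m * p + (p - a)
      obtain ⟨b, hb⟩ : ∃ b, p = a + b := ⟨p - a, by omega⟩
      have hpa : p - a = b := by omega
      rw [hpa]
      subst hb
      ring
    constructor
    · rw [coeff_fcoeff]
      exact_mod_cast (pos_fN n p (m * p + (p - a)) e₀ degE0 wtE0).ne'
    · intro e he hne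
      have heN : e ∈ (fN n p (m * p + (p - a))).support := by
        rw [mem_support_iff]
        intro h0
        rw [mem_support_iff, coeff_fcoeff, h0] at he
        simp at he
      obtain ⟨h1, h2⟩ := support_fN n p (m * p + (p - a)) e heN
      have e0apply : ∀ j : Fin (n+1), e₀ j
          = (if M = j then a else 0) + (if M1 = j then p - a else 0) := by
        intro j
        simp only [he₀, Finsupp.coe_add, Pi.add_apply, Finsupp.single_apply]
      by_cases hS : ∃ j : Fin (n+1), (j:ℕ) < m ∧ e j ≠ 0
      · obtain ⟨i, him, hie, hvan⟩ := find_min e m hS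
        refine ⟨i, ?_, ?_⟩
        · have hval := e0apply i
          have hiM : M ≠ i := fun h => by
            have := congrArg Fin.val h; simp only [hM] at this; omega
          have hiM1 : M1 ≠ i := fun h => by
            have := congrArg Fin.val h; simp only [hM1] at this; omega
          rw [if_neg hiM, if_neg hiM1] at hval
          omega
        · intro j hj
          have hval := e0apply j
          have hjm : (j:ℕ) < m := lt_trans (show (j:ℕ) < (i:ℕ) from hj) him
          have hjM : M ≠ j := fun h => by
            have := congrArg Fin.val h; simp only [hM] at this; omega
          have hjM1 : M1 ≠ j := fun h => by
            have := congrArg Fin.val h; simp only [hM1] at this; omega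
          rw [if_neg hjM, if_neg hjM1] at hval
          rw [hvan j hj, hval]
      · push_neg at hS
        have hvan : ∀ j : Fin (n+1), (j:ℕ) < m → e j = 0 := by
          intro j hjm
          by_contra hje
          exact hje (by_contra fun h => h (hS j hjm))
        obtain ⟨hstep1, hstep2⟩ := crux n p m a hm ha1 hap e h1 h2 hvan
        have hlt : a < e M := by
          rcases lt_or_eq_of_le hstep1 with h | h
          · exact h
          · exact absurd (hstep2 h.symm) hne
        refine ⟨M, ?_, ?_⟩
        · have hval := e0apply M
          rw [if_pos rfl, if_neg (Ne.symm hMM1)] at hval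
          omega
        · intro j hj
          have hval := e0apply j
          have hjm : (j:ℕ) < m := hj
          have hjM : M ≠ j := fun h => by
            have := congrArg Fin.val h; simp only [hM] at this; omega
          have hjM1 : M1 ≠ j := fun h => by
            have := congrArg Fin.val h; simp only [hM1] at this; omega
          rw [if_neg hjM, if_neg hjM1] at hval
          rw [hvan j hjm, hval]
  · set N : Fin (n+1) := ⟨n, by omega⟩ with hN
    have degE0 : (∑ j, (Finsupp.single N p) j) = p := by
      simp only [Finsupp.single_apply]
      rw [Finset.sum_ite_eq Finset.univ N (fun _ => p)]
      simp
    have wtE0 : (∑ j : Fin (n+1), (j:ℕ) * (Finsupp.single N p) j) = n * p := by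
      simp only [Finsupp.single_apply, mul_ite, mul_zero]
      rw [Finset.sum_ite_eq Finset.univ N (fun j => (j:ℕ) * p)]
      simp [hN]
    constructor
    · rw [coeff_fcoeff]
      exact_mod_cast (pos_fN n p (n * p) (Finsupp.single N p) degE0 wtE0).ne'
    · intro e he hne
      exfalso
      have heN : e ∈ (fN n p (n * p)).support := by
        rw [mem_support_iff]
        intro h0
        rw [mem_support_iff, coeff_fcoeff, h0] at he
        simp at he
      obtain ⟨h1, h2⟩ := support_fN n p (n * p) e heN
      have hex : ∃ j, j ≠ N ∧ e j ≠ 0 := by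
        by_contra hc
        push_neg at hc
        apply hne
        ext j
        by_cases hj : j = N
        · subst hj
          have hsum : (∑ j, e j) = e N := by
            apply Finset.sum_eq_single N (fun b _ hb => hc b hb)
            intro h
            exact absurd (Finset.mem_univ N) h
          rw [Finsupp.single_apply, if_pos rfl]
          omega
        · rw [hc j hj, Finsupp.single_apply, if_neg (fun h => hj h.symm)]
      obtain ⟨j0, hj0N, hj0⟩ := hex
      have hj0n : (j0:ℕ) < n := by
        have h := j0.isLt
        have : (j0:ℕ) ≠ n := fun h' => hj0N (Fin.ext (by simp [hN, h']))
        omega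
      have hlt : (∑ j : Fin (n+1), (j:ℕ) * e j) < ∑ j : Fin (n+1), n * e j := by
        apply Finset.sum_lt_sum
        · intro j _
          exact Nat.mul_le_mul_right _ (Fin.is_le j)
        · exact ⟨j0, Finset.mem_univ _,
            mul_lt_mul_of_pos_right hj0n (Nat.pos_of_ne_zero hj0)⟩
      rw [h2, ← Finset.mul_sum, h1] at hlt
      exact lt_irrefl _ hlt
end

section
/- In the bivariate setting, the mixed derivative (x^p)^{(a,b)} of x^p with respect to ∂_s^a ∂_t^b in the partial differential polynomial ring equals Σ over tuples (j_i^s) of natural numbers indexed by pairs (i,s) with Σ j_i^s = p, Σ i·j_i^s = a, Σ s·j_i^s = b, of the coefficient p!·a!·b! / Π_{i,s} ( j_i^s! · (i!)^{j_i^s} · (s!)^{j_i^s} ) times Π_{i,s} (x^{(i,s)})^{j_i^s}. -/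
open MvPolynomial Finset Nat

namespace Stmt17

noncomputable section

def NS (j : ℕ × ℕ →₀ ℕ) : ℕ := j.sum fun _ n => n
def W1 (j : ℕ × ℕ →₀ ℕ) : ℕ := j.sum fun q n => q.1 * n
def W2 (j : ℕ × ℕ →₀ ℕ) : ℕ := j.sum fun q n => q.2 * n
def DD (j : ℕ × ℕ →₀ ℕ) : ℕ :=
  j.prod fun q n => n.factorial * q.1.factorial ^ n * q.2.factorial ^ n

def SS (p a b : ℕ) : Finset (ℕ × ℕ →₀ ℕ) :=
  ((Finset.Iic a ×ˢ Finset.Iic b).finsuppAntidiag p).filter fun j => W1 j = a ∧ W2 j = b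

lemma mem_SS {p a b : ℕ} {j : ℕ × ℕ →₀ ℕ} :
    j ∈ SS p a b ↔ NS j = p ∧ W1 j = a ∧ W2 j = b := by
  rw [SS, Finset.mem_filter, Finset.mem_finsuppAntidiag']
  constructor
  · rintro ⟨⟨h1, _⟩, h2⟩; exact ⟨h1, h2⟩
  · rintro ⟨h1, h2, h3⟩
    refine ⟨⟨h1, fun q hq => ?_⟩, h2, h3⟩
    have hjq : 1 ≤ j q := Nat.one_le_iff_ne_zero.2 (Finsupp.mem_support_iff.1 hq)
    have h2' : q.1 * j q ≤ W1 j := Finset.single_le_sum (f := fun q' => q'.1 * j q') (fun i _ => Nat.zero_le _) hq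
    have h3' : q.2 * j q ≤ W2 j := Finset.single_le_sum (f := fun q' => q'.2 * j q') (fun i _ => Nat.zero_le _) hq
    rw [Finset.mem_product, Finset.mem_Iic, Finset.mem_Iic]
    constructor
    · calc q.1 ≤ q.1 * j q := Nat.le_mul_of_pos_right _ hjq
        _ ≤ a := h2 ▸ h2'
    · calc q.2 ≤ q.2 * j q := Nat.le_mul_of_pos_right _ hjq
        _ ≤ b := h3 ▸ h3'


lemma NS_add_single (j : ℕ × ℕ →₀ ℕ) (q : ℕ × ℕ) :
    NS (j + Finsupp.single q 1) = NS j + 1 := by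
  rw [NS, NS, Finsupp.sum_add_index' (fun _ => rfl) (fun _ _ _ => rfl)]
  simp [Finsupp.sum_single_index]

lemma W1_add_single (j : ℕ × ℕ →₀ ℕ) (q : ℕ × ℕ) :
    W1 (j + Finsupp.single q 1) = W1 j + q.1 := by
  rw [W1, W1, Finsupp.sum_add_index' (fun r => Nat.mul_zero _) (fun r m n => Nat.mul_add _ _ _)]
  simp [Finsupp.sum_single_index]

lemma W2_add_single (j : ℕ × ℕ →₀ ℕ) (q : ℕ × ℕ) :
    W2 (j + Finsupp.single q 1) = W2 j + q.2 := by
  rw [W2, W2, Finsupp.sum_add_index' (fun r => Nat.mul_zero _) (fun r m n => Nat.mul_add _ _ _)]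
  simp [Finsupp.sum_single_index]

lemma DD_add_single (j : ℕ × ℕ →₀ ℕ) (q : ℕ × ℕ) :
    DD (j + Finsupp.single q 1) = (j q + 1) * (q.1.factorial * q.2.factorial) * DD j := by
  classical
  set f : ℕ × ℕ → ℕ → ℕ := fun r n => n.factorial * r.1.factorial ^ n * r.2.factorial ^ n with hf
  have hf0 : ∀ r ∈ insert q j.support, f r 0 = 1 := by intro r _; simp [hf]
  have h1 : DD (j + Finsupp.single q 1)
      = ∏ x ∈ insert q j.support, f x ((j + Finsupp.single q 1 : ℕ × ℕ →₀ ℕ) x) := by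
    refine Finsupp.prod_of_support_subset _ ?_ _ hf0
    refine Finsupp.support_add.trans ?_
    intro x hx
    rcases Finset.mem_union.1 hx with h | h
    · exact Finset.mem_insert_of_mem h
    · have := Finsupp.support_single_subset h
      simp only [Finset.mem_singleton] at this
      simp [this]
  have h2 : DD j = ∏ x ∈ insert q j.support, f x (j x) :=
    Finsupp.prod_of_support_subset _ (Finset.subset_insert _ _) _ hf0
  rw [h1, h2, ← Finset.mul_prod_erase _ _ (Finset.mem_insert_self q _),
      ← Finset.mul_prod_erase _ (fun x => f x (j x)) (Finset.mem_insert_self q _)]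
  have h3 : ∏ x ∈ (insert q j.support).erase q, f x ((j + Finsupp.single q 1 : ℕ × ℕ →₀ ℕ) x)
      = ∏ x ∈ (insert q j.support).erase q, f x (j x) := by
    refine Finset.prod_congr rfl fun x hx => ?_
    have hne : x ≠ q := (Finset.mem_erase.1 hx).1
    simp [Finsupp.single_apply, Ne.symm hne]
  rw [h3]
  have h4 : (j + Finsupp.single q 1 : ℕ × ℕ →₀ ℕ) q = j q + 1 := by simp
  rw [h4, hf]
  simp only []
  rw [Nat.factorial_succ, pow_succ, pow_succ]
  ring

lemma DD_pos (j : ℕ × ℕ →₀ ℕ) : 0 < DD j := by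
  refine Finset.prod_pos fun q _ => ?_
  exact Nat.mul_pos (Nat.mul_pos (Nat.factorial_pos _)
    (Nat.pow_pos (Nat.factorial_pos _))) (Nat.pow_pos (Nat.factorial_pos _))


def PP (p a b : ℕ) : MvPolynomial (ℕ × ℕ) ℂ :=
  ∑ j ∈ SS p a b,
    (((p.factorial * a.factorial * b.factorial : ℕ) : ℂ) / (DD j : ℂ)) •
      MvPolynomial.monomial j (1 : ℂ)

lemma ds_monomial (ds : Derivation ℂ (MvPolynomial (ℕ × ℕ) ℂ) (MvPolynomial (ℕ × ℕ) ℂ))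
    (f : ℕ × ℕ → ℕ × ℕ) (hds : ∀ q : ℕ × ℕ, ds (X q) = X (f q)) (j : ℕ × ℕ →₀ ℕ) :
    ds (monomial j (1 : ℂ)) =
      ∑ q ∈ j.support, (j q : ℂ) •
        monomial (j - Finsupp.single q 1 + Finsupp.single (f q) 1) (1 : ℂ) := by
  have hd : ds = mkDerivation ℂ (fun q : ℕ × ℕ => X (f q)) :=
    derivation_ext fun q => by rw [mkDerivation_X]; exact hds q
  rw [hd, mkDerivation_monomial, one_smul, Finsupp.sum]
  refine Finset.sum_congr rfl fun q hq => ?_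
  rw [smul_eq_mul, X, monomial_mul, mul_one, smul_monomial, smul_eq_mul, mul_one]


lemma apply_add_single (j : ℕ × ℕ →₀ ℕ) (q : ℕ × ℕ) :
    (j + Finsupp.single q 1 : ℕ × ℕ →₀ ℕ) q = j q + 1 := by simp

lemma mem_support_add_single (j : ℕ × ℕ →₀ ℕ) (q : ℕ × ℕ) :
    q ∈ (j + Finsupp.single q 1 : ℕ × ℕ →₀ ℕ).support := by
  rw [Finsupp.mem_support_iff, apply_add_single]
  omega

set_option maxHeartbeats 2000000 in
lemma step_s (p a b : ℕ) (ds : Derivation ℂ (MvPolynomial (ℕ × ℕ) ℂ) (MvPolynomial (ℕ × ℕ) ℂ))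
    (hs : ∀ q : ℕ × ℕ, ds (X q) = X (q.1 + 1, q.2)) :
    ds (PP p a b) = PP p (a + 1) b := by
  classical
  set K : (ℕ × ℕ →₀ ℕ) → ℂ :=
    fun j => ((p.factorial * a.factorial * b.factorial : ℕ) : ℂ) / (DD j : ℂ) with hK
  have hL : ds (PP p a b) = ∑ j ∈ SS p a b, ∑ q ∈ j.support,
      (K j * (j q : ℂ)) •
        monomial (j - Finsupp.single q 1 + Finsupp.single (q.1 + 1, q.2) 1) (1 : ℂ) := by
    rw [PP, map_sum]
    refine Finset.sum_congr rfl fun j hj => ?_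
    rw [Derivation.map_smul, ds_monomial ds _ hs j, Finset.smul_sum]
    exact Finset.sum_congr rfl fun q hq => smul_smul _ _ _
  have hR : PP p (a + 1) b = ∑ j' ∈ SS p (a + 1) b,
      ∑ q' ∈ j'.support.filter (fun q' => 1 ≤ q'.1),
        (K j' * ((q'.1 * j' q' : ℕ) : ℂ)) • monomial j' (1 : ℂ) := by
    rw [PP]
    refine Finset.sum_congr rfl fun j' hj' => ?_
    have hW : W1 j' = a + 1 := (mem_SS.1 hj').2.1
    have hD : (DD j' : ℂ) ≠ 0 := Nat.cast_ne_zero.2 (DD_pos j').ne'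
    calc (((p.factorial * (a + 1).factorial * b.factorial : ℕ) : ℂ) / (DD j' : ℂ)) •
          monomial j' (1 : ℂ)
        = ∑ q' ∈ j'.support,
            (K j' * ((q'.1 * j' q' : ℕ) : ℂ)) • monomial j' (1 : ℂ) := by
          rw [← Finset.sum_smul, ← Finset.mul_sum, ← Nat.cast_sum]
          have hsum : (∑ q' ∈ j'.support, q'.1 * j' q') = a + 1 := hW
          rw [hsum]
          have hc : (((p.factorial * (a + 1).factorial * b.factorial : ℕ) : ℂ) / (DD j' : ℂ))
              = K j' * ((a + 1 : ℕ) : ℂ) := by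
            rw [hK]
            field_simp
            push_cast [Nat.factorial_succ]
            ring
          exact congrArg (fun c : ℂ => c • monomial j' (1 : ℂ)) hc
      _ = _ := by
          refine (Finset.sum_filter_of_ne fun q' hq' hne => ?_).symm
          by_contra h
          have h0 : q'.1 = 0 := by omega
          apply hne
          simp [h0]
  rw [hL, hR, Finset.sum_sigma', Finset.sum_sigma']
  refine Finset.sum_nbij'
    (fun x => ⟨x.1 - Finsupp.single x.2 1 + Finsupp.single (x.2.1 + 1, x.2.2) 1,
      (x.2.1 + 1, x.2.2)⟩)
    (fun y => ⟨y.1 - Finsupp.single y.2 1 + Finsupp.single (y.2.1 - 1, y.2.2) 1,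
      (y.2.1 - 1, y.2.2)⟩) ?_ ?_ ?_ ?_ ?_
  · rintro ⟨j, q⟩ hx
    rw [Finset.mem_sigma] at hx ⊢
    obtain ⟨hj, hq⟩ := hx
    have h1 : 1 ≤ j q := Nat.one_le_iff_ne_zero.2 (Finsupp.mem_support_iff.1 hq)
    have hle : Finsupp.single q 1 ≤ j := Finsupp.single_le_iff.2 h1
    have hsub : (j - Finsupp.single q 1) + Finsupp.single q 1 = j := tsub_add_cancel_of_le hle
    obtain ⟨hNS, hW1, hW2⟩ := mem_SS.1 hj
    rw [← hsub, NS_add_single] at hNS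
    rw [← hsub, W1_add_single] at hW1
    rw [← hsub, W2_add_single] at hW2
    dsimp only
    constructor
    · rw [mem_SS, NS_add_single, W1_add_single, W2_add_single]
      refine ⟨by omega, by omega, by omega⟩
    · rw [Finset.mem_filter]
      exact ⟨mem_support_add_single _ _, by omega⟩
  · rintro ⟨j', q'⟩ hy
    rw [Finset.mem_sigma] at hy ⊢
    obtain ⟨hj', hq'f⟩ := hy
    rw [Finset.mem_filter] at hq'f
    obtain ⟨hq', hge⟩ := hq'f
    have hge1 : 1 ≤ q'.1 := hge
    have h1 : 1 ≤ j' q' := Nat.one_le_iff_ne_zero.2 (Finsupp.mem_support_iff.1 hq')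
    have hle : Finsupp.single q' 1 ≤ j' := Finsupp.single_le_iff.2 h1
    have hsub : (j' - Finsupp.single q' 1) + Finsupp.single q' 1 = j' := tsub_add_cancel_of_le hle
    obtain ⟨hNS, hW1, hW2⟩ := mem_SS.1 hj'
    rw [← hsub, NS_add_single] at hNS
    rw [← hsub, W1_add_single] at hW1
    rw [← hsub, W2_add_single] at hW2
    dsimp only
    constructor
    · rw [mem_SS, NS_add_single, W1_add_single, W2_add_single]
      refine ⟨by omega, by omega, by omega⟩
    · exact mem_support_add_single _ _
  · rintro ⟨j, q⟩ hx
    rw [Finset.mem_sigma] at hx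
    obtain ⟨hj, hq⟩ := hx
    have h1 : 1 ≤ j q := Nat.one_le_iff_ne_zero.2 (Finsupp.mem_support_iff.1 hq)
    have hle : Finsupp.single q 1 ≤ j := Finsupp.single_le_iff.2 h1
    have hsub : (j - Finsupp.single q 1) + Finsupp.single q 1 = j := tsub_add_cancel_of_le hle
    dsimp only
    have e1 : (q.1 + 1 - 1, q.2) = q := by simp
    rw [add_tsub_cancel_right, e1, hsub]
  · rintro ⟨j', q'⟩ hy
    rw [Finset.mem_sigma] at hy
    obtain ⟨hj', hq'f⟩ := hy
    rw [Finset.mem_filter] at hq'f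
    obtain ⟨hq', hge⟩ := hq'f
    have hge1 : 1 ≤ q'.1 := hge
    have h1 : 1 ≤ j' q' := Nat.one_le_iff_ne_zero.2 (Finsupp.mem_support_iff.1 hq')
    have hle : Finsupp.single q' 1 ≤ j' := Finsupp.single_le_iff.2 h1
    have hsub : (j' - Finsupp.single q' 1) + Finsupp.single q' 1 = j' := tsub_add_cancel_of_le hle
    dsimp only
    have e1 : (q'.1 - 1 + 1, q'.2) = q' := by
      have : q'.1 - 1 + 1 = q'.1 := by omega
      rw [this]
    rw [add_tsub_cancel_right, e1, hsub]
  · rintro ⟨j, q⟩ hx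
    rw [Finset.mem_sigma] at hx
    obtain ⟨hj, hq⟩ := hx
    have h1 : 1 ≤ j q := Nat.one_le_iff_ne_zero.2 (Finsupp.mem_support_iff.1 hq)
    have hle : Finsupp.single q 1 ≤ j := Finsupp.single_le_iff.2 h1
    have hsub : (j - Finsupp.single q 1) + Finsupp.single q 1 = j := tsub_add_cancel_of_le hle
    dsimp only
    congr 1
    -- scalar equality
    set j₀ := j - Finsupp.single q 1 with hj₀
    have hjq : j q = j₀ q + 1 := by rw [← hsub, apply_add_single]
    have happ : (j₀ + Finsupp.single (q.1 + 1, q.2) 1 : ℕ × ℕ →₀ ℕ) (q.1 + 1, q.2)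
        = j₀ (q.1 + 1, q.2) + 1 := apply_add_single _ _
    have hDDj : DD j = (j₀ q + 1) * (q.1.factorial * q.2.factorial) * DD j₀ := by
      rw [← hsub, DD_add_single]
    have hDDn : DD (j₀ + Finsupp.single (q.1 + 1, q.2) 1)
        = (j₀ (q.1 + 1, q.2) + 1) * ((q.1 + 1).factorial * q.2.factorial) * DD j₀ :=
      DD_add_single _ _
    rw [hK]
    dsimp only
    rw [hjq, happ, hDDj, hDDn]
    have hden1 : (((j₀ q + 1) * (q.1.factorial * q.2.factorial) * DD j₀ : ℕ) : ℂ) ≠ 0 := by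
      refine Nat.cast_ne_zero.2 (Nat.mul_ne_zero (Nat.mul_ne_zero (by omega) ?_) (DD_pos j₀).ne')
      exact (Nat.mul_pos (Nat.factorial_pos _) (Nat.factorial_pos _)).ne'
    have hden2 : (((j₀ (q.1 + 1, q.2) + 1) * ((q.1 + 1).factorial * q.2.factorial) * DD j₀ : ℕ) : ℂ)
        ≠ 0 := by
      refine Nat.cast_ne_zero.2 (Nat.mul_ne_zero (Nat.mul_ne_zero (by omega) ?_) (DD_pos j₀).ne')
      exact (Nat.mul_pos (Nat.factorial_pos _) (Nat.factorial_pos _)).ne'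
    rw [div_mul_eq_mul_div, div_mul_eq_mul_div, div_eq_div_iff hden1 hden2]
    push_cast [Nat.factorial_succ]
    ring





set_option maxHeartbeats 2000000 in
lemma step_t (p a b : ℕ) (dt : Derivation ℂ (MvPolynomial (ℕ × ℕ) ℂ) (MvPolynomial (ℕ × ℕ) ℂ))
    (ht : ∀ q : ℕ × ℕ, dt (X q) = X (q.1, q.2 + 1)) :
    dt (PP p a b) = PP p a (b + 1) := by
  classical
  set K : (ℕ × ℕ →₀ ℕ) → ℂ :=
    fun j => ((p.factorial * a.factorial * b.factorial : ℕ) : ℂ) / (DD j : ℂ) with hK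
  have hL : dt (PP p a b) = ∑ j ∈ SS p a b, ∑ q ∈ j.support,
      (K j * (j q : ℂ)) •
        monomial (j - Finsupp.single q 1 + Finsupp.single (q.1, q.2 + 1) 1) (1 : ℂ) := by
    rw [PP, map_sum]
    refine Finset.sum_congr rfl fun j hj => ?_
    rw [Derivation.map_smul, ds_monomial dt _ ht j, Finset.smul_sum]
    exact Finset.sum_congr rfl fun q hq => smul_smul _ _ _
  have hR : PP p a (b + 1) = ∑ j' ∈ SS p a (b + 1),
      ∑ q' ∈ j'.support.filter (fun q' => 1 ≤ q'.2),
        (K j' * ((q'.2 * j' q' : ℕ) : ℂ)) • monomial j' (1 : ℂ) := by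
    rw [PP]
    refine Finset.sum_congr rfl fun j' hj' => ?_
    have hW : W2 j' = b + 1 := (mem_SS.1 hj').2.2
    have hD : (DD j' : ℂ) ≠ 0 := Nat.cast_ne_zero.2 (DD_pos j').ne'
    calc (((p.factorial * a.factorial * (b + 1).factorial : ℕ) : ℂ) / (DD j' : ℂ)) •
          monomial j' (1 : ℂ)
        = ∑ q' ∈ j'.support,
            (K j' * ((q'.2 * j' q' : ℕ) : ℂ)) • monomial j' (1 : ℂ) := by
          rw [← Finset.sum_smul, ← Finset.mul_sum, ← Nat.cast_sum]
          have hsum : (∑ q' ∈ j'.support, q'.2 * j' q') = b + 1 := hW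
          rw [hsum]
          have hc : (((p.factorial * a.factorial * (b + 1).factorial : ℕ) : ℂ) / (DD j' : ℂ))
              = K j' * ((b + 1 : ℕ) : ℂ) := by
            rw [hK]
            field_simp
            push_cast [Nat.factorial_succ]
            ring
          exact congrArg (fun c : ℂ => c • monomial j' (1 : ℂ)) hc
      _ = _ := by
          refine (Finset.sum_filter_of_ne fun q' hq' hne => ?_).symm
          by_contra h
          have h0 : q'.2 = 0 := by omega
          apply hne
          simp [h0]
  rw [hL, hR, Finset.sum_sigma', Finset.sum_sigma']
  refine Finset.sum_nbij'
    (fun x => ⟨x.1 - Finsupp.single x.2 1 + Finsupp.single (x.2.1, x.2.2 + 1) 1,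
      (x.2.1, x.2.2 + 1)⟩)
    (fun y => ⟨y.1 - Finsupp.single y.2 1 + Finsupp.single (y.2.1, y.2.2 - 1) 1,
      (y.2.1, y.2.2 - 1)⟩) ?_ ?_ ?_ ?_ ?_
  · rintro ⟨j, q⟩ hx
    rw [Finset.mem_sigma] at hx ⊢
    obtain ⟨hj, hq⟩ := hx
    have h1 : 1 ≤ j q := Nat.one_le_iff_ne_zero.2 (Finsupp.mem_support_iff.1 hq)
    have hle : Finsupp.single q 1 ≤ j := Finsupp.single_le_iff.2 h1
    have hsub : (j - Finsupp.single q 1) + Finsupp.single q 1 = j := tsub_add_cancel_of_le hle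
    obtain ⟨hNS, hW1, hW2⟩ := mem_SS.1 hj
    rw [← hsub, NS_add_single] at hNS
    rw [← hsub, W1_add_single] at hW1
    rw [← hsub, W2_add_single] at hW2
    dsimp only
    constructor
    · rw [mem_SS, NS_add_single, W1_add_single, W2_add_single]
      refine ⟨by omega, by omega, by omega⟩
    · rw [Finset.mem_filter]
      exact ⟨mem_support_add_single _ _, by omega⟩
  · rintro ⟨j', q'⟩ hy
    rw [Finset.mem_sigma] at hy ⊢
    obtain ⟨hj', hq'f⟩ := hy
    rw [Finset.mem_filter] at hq'f
    obtain ⟨hq', hge⟩ := hq'f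
    have hge1 : 1 ≤ q'.2 := hge
    have h1 : 1 ≤ j' q' := Nat.one_le_iff_ne_zero.2 (Finsupp.mem_support_iff.1 hq')
    have hle : Finsupp.single q' 1 ≤ j' := Finsupp.single_le_iff.2 h1
    have hsub : (j' - Finsupp.single q' 1) + Finsupp.single q' 1 = j' := tsub_add_cancel_of_le hle
    obtain ⟨hNS, hW1, hW2⟩ := mem_SS.1 hj'
    rw [← hsub, NS_add_single] at hNS
    rw [← hsub, W1_add_single] at hW1
    rw [← hsub, W2_add_single] at hW2
    dsimp only
    constructor
    · rw [mem_SS, NS_add_single, W1_add_single, W2_add_single]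
      refine ⟨by omega, by omega, by omega⟩
    · exact mem_support_add_single _ _
  · rintro ⟨j, q⟩ hx
    rw [Finset.mem_sigma] at hx
    obtain ⟨hj, hq⟩ := hx
    have h1 : 1 ≤ j q := Nat.one_le_iff_ne_zero.2 (Finsupp.mem_support_iff.1 hq)
    have hle : Finsupp.single q 1 ≤ j := Finsupp.single_le_iff.2 h1
    have hsub : (j - Finsupp.single q 1) + Finsupp.single q 1 = j := tsub_add_cancel_of_le hle
    dsimp only
    have e1 : (q.1, q.2 + 1 - 1) = q := by simp
    rw [add_tsub_cancel_right, e1, hsub]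
  · rintro ⟨j', q'⟩ hy
    rw [Finset.mem_sigma] at hy
    obtain ⟨hj', hq'f⟩ := hy
    rw [Finset.mem_filter] at hq'f
    obtain ⟨hq', hge⟩ := hq'f
    have hge1 : 1 ≤ q'.2 := hge
    have h1 : 1 ≤ j' q' := Nat.one_le_iff_ne_zero.2 (Finsupp.mem_support_iff.1 hq')
    have hle : Finsupp.single q' 1 ≤ j' := Finsupp.single_le_iff.2 h1
    have hsub : (j' - Finsupp.single q' 1) + Finsupp.single q' 1 = j' := tsub_add_cancel_of_le hle
    dsimp only
    have e1 : (q'.1, q'.2 - 1 + 1) = q' := by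
      have : q'.2 - 1 + 1 = q'.2 := by omega
      rw [this]
    rw [add_tsub_cancel_right, e1, hsub]
  · rintro ⟨j, q⟩ hx
    rw [Finset.mem_sigma] at hx
    obtain ⟨hj, hq⟩ := hx
    have h1 : 1 ≤ j q := Nat.one_le_iff_ne_zero.2 (Finsupp.mem_support_iff.1 hq)
    have hle : Finsupp.single q 1 ≤ j := Finsupp.single_le_iff.2 h1
    have hsub : (j - Finsupp.single q 1) + Finsupp.single q 1 = j := tsub_add_cancel_of_le hle
    dsimp only
    congr 1
    set j₀ := j - Finsupp.single q 1 with hj₀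
    have hjq : j q = j₀ q + 1 := by rw [← hsub, apply_add_single]
    have happ : (j₀ + Finsupp.single (q.1, q.2 + 1) 1 : ℕ × ℕ →₀ ℕ) (q.1, q.2 + 1)
        = j₀ (q.1, q.2 + 1) + 1 := apply_add_single _ _
    have hDDj : DD j = (j₀ q + 1) * (q.1.factorial * q.2.factorial) * DD j₀ := by
      rw [← hsub, DD_add_single]
    have hDDn : DD (j₀ + Finsupp.single (q.1, q.2 + 1) 1)
        = (j₀ (q.1, q.2 + 1) + 1) * (q.1.factorial * (q.2 + 1).factorial) * DD j₀ :=
      DD_add_single _ _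
    rw [hK]
    dsimp only
    rw [hjq, happ, hDDj, hDDn]
    have hden1 : (((j₀ q + 1) * (q.1.factorial * q.2.factorial) * DD j₀ : ℕ) : ℂ) ≠ 0 := by
      refine Nat.cast_ne_zero.2 (Nat.mul_ne_zero (Nat.mul_ne_zero (by omega) ?_) (DD_pos j₀).ne')
      exact (Nat.mul_pos (Nat.factorial_pos _) (Nat.factorial_pos _)).ne'
    have hden2 : (((j₀ (q.1, q.2 + 1) + 1) * (q.1.factorial * (q.2 + 1).factorial) * DD j₀ : ℕ) : ℂ)
        ≠ 0 := by
      refine Nat.cast_ne_zero.2 (Nat.mul_ne_zero (Nat.mul_ne_zero (by omega) ?_) (DD_pos j₀).ne')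
      exact (Nat.mul_pos (Nat.factorial_pos _) (Nat.factorial_pos _)).ne'
    rw [div_mul_eq_mul_div, div_mul_eq_mul_div, div_eq_div_iff hden1 hden2]
    push_cast [Nat.factorial_succ]
    ring





lemma SS_zero_zero (p : ℕ) : SS p 0 0 = {Finsupp.single ((0, 0) : ℕ × ℕ) p} := by
  ext j
  rw [mem_SS, Finset.mem_singleton]
  constructor
  · rintro ⟨h1, h2, h3⟩
    have hsupp : j.support ⊆ {((0, 0) : ℕ × ℕ)} := by
      intro q hq
      have hjq : 1 ≤ j q := Nat.one_le_iff_ne_zero.2 (Finsupp.mem_support_iff.1 hq)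
      have h2' : q.1 * j q ≤ W1 j :=
        Finset.single_le_sum (f := fun q' => q'.1 * j q') (fun i _ => Nat.zero_le _) hq
      have h3' : q.2 * j q ≤ W2 j :=
        Finset.single_le_sum (f := fun q' => q'.2 * j q') (fun i _ => Nat.zero_le _) hq
      rw [h2] at h2'
      rw [h3] at h3'
      have hq1 : q.1 = 0 := by
        rcases Nat.eq_zero_of_le_zero h2' |> Nat.mul_eq_zero.1 with h | h
        · exact h
        · omega
      have hq2 : q.2 = 0 := by
        rcases Nat.eq_zero_of_le_zero h3' |> Nat.mul_eq_zero.1 with h | h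
        · exact h
        · omega
      simp only [Finset.mem_singleton]
      exact Prod.ext hq1 hq2
    have hj : j = Finsupp.single ((0, 0) : ℕ × ℕ) (j (0, 0)) :=
      Finsupp.support_subset_singleton.1 hsupp
    have hNS : NS j = j (0, 0) := by
      rw [hj, NS, Finsupp.sum_single_index rfl]
      simp
    rw [hj, ← h1, hNS]
  · rintro rfl
    refine ⟨?_, ?_, ?_⟩
    · rw [NS]
      exact Finsupp.sum_single_index rfl
    · rw [W1]
      simp [Finsupp.sum_single_index]
    · rw [W2]
      simp [Finsupp.sum_single_index]

lemma PP_zero_zero (p : ℕ) : PP p 0 0 = X ((0, 0) : ℕ × ℕ) ^ p := by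
  rw [PP, SS_zero_zero, Finset.sum_singleton]
  have hDD : DD (Finsupp.single ((0, 0) : ℕ × ℕ) p) = p.factorial := by
    rw [DD, Finsupp.prod_single_index (by simp)]
    simp [Nat.factorial]
  rw [hDD]
  have hc : ((p.factorial * Nat.factorial 0 * Nat.factorial 0 : ℕ) : ℂ) = (p.factorial : ℂ) := by
    norm_num [Nat.factorial]
  rw [hc, div_self (Nat.cast_ne_zero.2 (Nat.factorial_pos p).ne'), one_smul, X_pow_eq_monomial]

lemma pow_fact_dvd (m n : ℕ) : (m.factorial) ^ n ∣ (m * n).factorial := by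
  induction n with
  | zero => simp
  | succ k ih =>
    rw [pow_succ, Nat.mul_succ]
    exact dvd_trans (mul_dvd_mul ih dvd_rfl)
      (Nat.factorial_mul_factorial_dvd_factorial_add _ _)

lemma DD_dvd (j : ℕ × ℕ →₀ ℕ) (p a b : ℕ) (h1 : NS j = p) (h2 : W1 j = a) (h3 : W2 j = b) :
    DD j ∣ p.factorial * a.factorial * b.factorial := by
  have hDD : DD j = (∏ q ∈ j.support, (j q).factorial) *
      (∏ q ∈ j.support, q.1.factorial ^ (j q)) *
      (∏ q ∈ j.support, q.2.factorial ^ (j q)) := by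
    rw [DD, Finsupp.prod, ← Finset.prod_mul_distrib, ← Finset.prod_mul_distrib]
  rw [hDD]
  refine mul_dvd_mul (mul_dvd_mul ?_ ?_) ?_
  · rw [← h1, NS]
    exact Nat.prod_factorial_dvd_factorial_sum _ _
  · refine dvd_trans (Finset.prod_dvd_prod_of_dvd _ _ fun q _ => pow_fact_dvd q.1 (j q)) ?_
    rw [← h2, W1]
    exact Nat.prod_factorial_dvd_factorial_sum _ _
  · refine dvd_trans (Finset.prod_dvd_prod_of_dvd _ _ fun q _ => pow_fact_dvd q.2 (j q)) ?_
    rw [← h3, W2]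
    exact Nat.prod_factorial_dvd_factorial_sum _ _



end
end Stmt17

open MvPolynomial Finset Nat Stmt17


set_option maxHeartbeats 2000000 in
theorem stmt17 (p a b : ℕ)
    (ds dt : Derivation ℂ (MvPolynomial (ℕ × ℕ) ℂ) (MvPolynomial (ℕ × ℕ) ℂ))
    (hs : ∀ k l : ℕ, ds (MvPolynomial.X (k, l)) = MvPolynomial.X (k+1, l))
    (ht : ∀ k l : ℕ, dt (MvPolynomial.X (k, l)) = MvPolynomial.X (k, l+1)) :
    (fun y => ds y)^[a] ((fun y => dt y)^[b]
        ((MvPolynomial.X (0, 0) : MvPolynomial (ℕ × ℕ) ℂ) ^ p)) =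
    ∑ j ∈ ((Finset.Iic a ×ˢ Finset.Iic b).finsuppAntidiag p).filter
        (fun j => (∑ q ∈ Finset.Iic a ×ˢ Finset.Iic b, q.1 * j q) = a ∧
                  (∑ q ∈ Finset.Iic a ×ˢ Finset.Iic b, q.2 * j q) = b),
      ((p.factorial * a.factorial * b.factorial /
          ∏ q ∈ Finset.Iic a ×ˢ Finset.Iic b,
            ((j q).factorial * q.1.factorial ^ (j q) * q.2.factorial ^ (j q)) : ℕ) :
        MvPolynomial (ℕ × ℕ) ℂ) *
        ∏ q ∈ Finset.Iic a ×ˢ Finset.Iic b, MvPolynomial.X q ^ j q := by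
  classical
  have hs' : ∀ q : ℕ × ℕ, ds (X q) = X (q.1 + 1, q.2) := fun q => by
    obtain ⟨k, l⟩ := q; exact hs k l
  have ht' : ∀ q : ℕ × ℕ, dt (X q) = X (q.1, q.2 + 1) := fun q => by
    obtain ⟨k, l⟩ := q; exact ht k l
  have hiter : (fun y => ds y)^[a] ((fun y => dt y)^[b]
      ((MvPolynomial.X (0, 0) : MvPolynomial (ℕ × ℕ) ℂ) ^ p)) = PP p a b := by
    have hb : (fun y => dt y)^[b]
        ((MvPolynomial.X (0, 0) : MvPolynomial (ℕ × ℕ) ℂ) ^ p) = PP p 0 b := by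
      induction b with
      | zero => simpa using (PP_zero_zero p).symm
      | succ n ih => rw [Function.iterate_succ_apply', ih, step_t p 0 n dt ht']
    rw [hb]
    induction a with
    | zero => simp
    | succ n ih => rw [Function.iterate_succ_apply', ih, step_s p n b ds hs']
  rw [hiter, PP]
  refine Finset.sum_congr ?_ ?_
  · rw [SS]
    refine Finset.filter_congr fun j hj => ?_
    have hsupp : j.support ⊆ Finset.Iic a ×ˢ Finset.Iic b := (Finset.mem_finsuppAntidiag.1 hj).2
    have e1 : W1 j = ∑ q ∈ Finset.Iic a ×ˢ Finset.Iic b, q.1 * j q := by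
      rw [W1, Finsupp.sum]
      exact Finset.sum_subset hsupp fun x _ hnx => by
        rw [Finsupp.notMem_support_iff.1 hnx, Nat.mul_zero]
    have e2 : W2 j = ∑ q ∈ Finset.Iic a ×ˢ Finset.Iic b, q.2 * j q := by
      rw [W2, Finsupp.sum]
      exact Finset.sum_subset hsupp fun x _ hnx => by
        rw [Finsupp.notMem_support_iff.1 hnx, Nat.mul_zero]
    rw [e1, e2]
  · intro j hj
    have hj' : j ∈ SS p a b := by
      rw [SS, Finset.mem_filter]
      rw [Finset.mem_filter] at hj
      obtain ⟨h1, h2, h3⟩ := hj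
      have hsupp : j.support ⊆ Finset.Iic a ×ˢ Finset.Iic b := (Finset.mem_finsuppAntidiag.1 h1).2
      have e1 : W1 j = ∑ q ∈ Finset.Iic a ×ˢ Finset.Iic b, q.1 * j q := by
        rw [W1, Finsupp.sum]
        exact Finset.sum_subset hsupp fun x _ hnx => by
          rw [Finsupp.notMem_support_iff.1 hnx, Nat.mul_zero]
      have e2 : W2 j = ∑ q ∈ Finset.Iic a ×ˢ Finset.Iic b, q.2 * j q := by
        rw [W2, Finsupp.sum]
        exact Finset.sum_subset hsupp fun x _ hnx => by
          rw [Finsupp.notMem_support_iff.1 hnx, Nat.mul_zero]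
      exact ⟨h1, by rw [e1]; exact h2, by rw [e2]; exact h3⟩
    obtain ⟨hNS, hW1, hW2⟩ := mem_SS.1 hj'
    have hsupp : j.support ⊆ Finset.Iic a ×ˢ Finset.Iic b :=
      (Finset.mem_finsuppAntidiag.1 (Finset.mem_filter.1 hj').1).2
    have hprod : ∏ q ∈ Finset.Iic a ×ˢ Finset.Iic b, MvPolynomial.X q ^ j q
        = monomial j (1 : ℂ) := by
      rw [monomial_eq, C_1, one_mul]
      exact (Finsupp.prod_of_support_subset j hsupp (fun q n => X q ^ n)
        (fun q _ => pow_zero _)).symm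
    have hDDeq : ∏ q ∈ Finset.Iic a ×ˢ Finset.Iic b,
        ((j q).factorial * q.1.factorial ^ (j q) * q.2.factorial ^ (j q)) = DD j := by
      rw [DD]
      exact (Finsupp.prod_of_support_subset j hsupp
        (fun q n => n.factorial * q.1.factorial ^ n * q.2.factorial ^ n)
        (fun q _ => by simp)).symm
    have hdvd : DD j ∣ p.factorial * a.factorial * b.factorial := DD_dvd j p a b hNS hW1 hW2
    have hne : ((DD j : ℕ) : ℂ) ≠ 0 := Nat.cast_ne_zero.2 (DD_pos j).ne'
    rw [hprod, hDDeq, smul_eq_C_mul,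
      ← map_natCast (C : ℂ →+* MvPolynomial (ℕ × ℕ) ℂ)
        (p.factorial * a.factorial * b.factorial / DD j),
      Nat.cast_div hdvd hne]
end
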